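/- For a matrix weight W of size N the following three conditions are equivalent: (i) W is unitarily equivalent to a diagonal matrix weight; (ii) W(x) W(y) = W(y) W(x) for all x, y; (iii) there exists a positive definite matrix P such that W(x) P W(y) = W(y) P W(x) and W(x) P = P W(x) for all x, y. -/

import Mathlib

open MeasureTheory Matrix
open scoped ComplexOrder

noncomputable section

/-- The set of real points strictly between the extended-real endpoints `a` and `b`. -/
def weightSupport (a b : EReal) : Set ℝ := {x : ℝ | a < (x : EReal) ∧ (x : EReal) < b}

variable {I : Type} [Fintype I] [DecidableEq I]
variable {I' : Type} [Fintype I'] [DecidableEq I']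

/-- Entrywise integral of a matrix-valued function over a set. -/
def matIntegral (S : Set ℝ) (F : ℝ → Matrix I I ℂ) : Matrix I I ℂ :=
  Matrix.of fun i j => ∫ x in S, F x i j

/-- `W` is a matrix weight on the (nondegenerate) interval `(a,b)`. -/
def IsMatrixWeight (a b : EReal) (W : ℝ → Matrix I I ℂ) : Prop :=
  a < b ∧
  (∀ x ∈ weightSupport a b, (W x).PosSemidef) ∧
  (∀ᵐ x : ℝ ∂(volume.restrict (weightSupport a b)), (W x).PosDef) ∧
  (∀ n : ℕ, ∀ i j, IntegrableOn (fun x : ℝ => (x : ℂ) ^ n * W x i j) (weightSupport a b))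

/-- Equivalence of matrix weights: `W' = M W M*` for a nonsingular `M`. -/
def WeightEquiv (a b : EReal) (W : ℝ → Matrix I I ℂ) (W' : ℝ → Matrix I' I' ℂ) : Prop :=
  ∃ (M : Matrix I' I ℂ) (M' : Matrix I I' ℂ), M * M' = 1 ∧ M' * M = 1 ∧
    ∀ x ∈ weightSupport a b, W' x = M * W x * Mᴴ

/-- Unitary equivalence of matrix weights. -/
def UnitaryWeightEquiv (a b : EReal) (W : ℝ → Matrix I I ℂ) (W' : ℝ → Matrix I' I' ℂ) : Prop :=
  ∃ M : Matrix I' I ℂ, M * Mᴴ = 1 ∧ Mᴴ * M = 1 ∧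
    ∀ x ∈ weightSupport a b, W' x = M * W x * Mᴴ

/-- `W` reduces: it is equivalent to a direct sum of two matrix weights of smaller size. -/
def Reduces (a b : EReal) (W : ℝ → Matrix I I ℂ) : Prop :=
  ∃ (N₁ N₂ : ℕ) (W₁ : ℝ → Matrix (Fin N₁) (Fin N₁) ℂ) (W₂ : ℝ → Matrix (Fin N₂) (Fin N₂) ℂ),
    0 < N₁ ∧ 0 < N₂ ∧ N₁ + N₂ = Fintype.card I ∧
    IsMatrixWeight a b W₁ ∧ IsMatrixWeight a b W₂ ∧
    WeightEquiv a b W (fun x => Matrix.fromBlocks (W₁ x) 0 0 (W₂ x))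

/-- The real vector space `C_ℝ` of a matrix weight. -/
def CR (a b : EReal) (W : ℝ → Matrix I I ℂ) : Set (Matrix I I ℂ) :=
  {T | ∀ᵐ x ∂(volume.restrict (weightSupport a b)), T * W x = W x * Tᴴ}

/-- Evaluation of a matrix polynomial at a real point. -/
def polyEval (p : Polynomial (Matrix I I ℂ)) (x : ℝ) : Matrix I I ℂ :=
  p.eval ((x : ℂ) • (1 : Matrix I I ℂ))

/-- A sequence of orthogonal polynomials with respect to `W`:  `Q n` has degree `n` with
nonsingular leading coefficient, and distinct members are orthogonal. -/
def IsOPS (a b : EReal) (W : ℝ → Matrix I I ℂ) (Q : ℕ → Polynomial (Matrix I I ℂ)) : Prop :=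
  (∀ n, (Q n).natDegree = n ∧ IsUnit ((Q n).coeff n)) ∧
  ∀ n m, n ≠ m →
    matIntegral (weightSupport a b) (fun x => polyEval (Q n) x * W x * (polyEval (Q m) x)ᴴ) = 0

/-- The sequence of monic orthogonal polynomials with respect to `W`. -/
def IsMonicOPS (a b : EReal) (W : ℝ → Matrix I I ℂ) (P : ℕ → Polynomial (Matrix I I ℂ)) : Prop :=
  (∀ n, (P n).Monic ∧ (P n).natDegree = n) ∧
  ∀ n m, n ≠ m →
    matIntegral (weightSupport a b) (fun x => polyEval (P n) x * W x * (polyEval (P m) x)ᴴ) = 0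

end

section MyAux

lemma isDiag_mul_comm' {n : Type*} [Fintype n] {A B : Matrix n n ℂ}
    (hA : A.IsDiag) (hB : B.IsDiag) : A * B = B * A := by
  classical
  ext i j
  rw [Matrix.mul_apply, Matrix.mul_apply]
  refine Finset.sum_congr rfl fun k _ => ?_
  by_cases h1 : i = k
  · subst h1
    by_cases h2 : i = j
    · subst h2; ring
    · rw [hB h2, hA h2, mul_zero, mul_zero]
  · rw [hA h1, hB h1, zero_mul, zero_mul]

lemma posDef_conj_unitary' {n : Type*} [Fintype n] [DecidableEq n]
    {A U : Matrix n n ℂ} (hA : A.PosDef) (hU : Uᴴ * U = 1) :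
    (Uᴴ * A * U).PosDef := by
  refine Matrix.PosDef.of_dotProduct_mulVec_pos (Matrix.isHermitian_conjTranspose_mul_mul U hA.1) fun x hx => ?_
  have hUx : U *ᵥ x ≠ 0 := by
    intro h
    apply hx
    have := congrArg (fun v => Uᴴ *ᵥ v) h
    simpa [Matrix.mulVec_mulVec, hU] using this
  have key : star x ⬝ᵥ ((Uᴴ * A * U) *ᵥ x) = star (U *ᵥ x) ⬝ᵥ (A *ᵥ (U *ᵥ x)) := by
    rw [star_mulVec, ← Matrix.mulVec_mulVec, ← Matrix.mulVec_mulVec,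
      Matrix.dotProduct_mulVec _ Uᴴ, Matrix.vecMul_conjTranspose]
  rw [key]
  exact hA.dotProduct_mulVec_pos hUx

lemma conj_mul_conj {n : Type*} [Fintype n] [DecidableEq n]
    (U A B : Matrix n n ℂ) (hUU : Uᴴ * U = 1) :
    (U * A * Uᴴ) * (U * B * Uᴴ) = U * (A * B) * Uᴴ := by
  calc (U * A * Uᴴ) * (U * B * Uᴴ) = U * A * ((Uᴴ * U) * B * Uᴴ) := by
        simp only [Matrix.mul_assoc]
    _ = U * (A * B) * Uᴴ := by
        rw [hUU, Matrix.one_mul]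
        simp only [Matrix.mul_assoc]

set_option maxHeartbeats 1000000 in
set_option maxRecDepth 4000 in
lemma simultaneous_diag' {N : ℕ} (S : Set ℝ) (W : ℝ → Matrix (Fin N) (Fin N) ℂ)
    (hherm : ∀ x ∈ S, (W x).IsHermitian)
    (hcomm : ∀ x ∈ S, ∀ y ∈ S, W x * W y = W y * W x) :
    ∃ U : Matrix (Fin N) (Fin N) ℂ, U * Uᴴ = 1 ∧ Uᴴ * U = 1 ∧
      ∀ x ∈ S, ∃ μ : Fin N → ℂ, W x * U = U * Matrix.diagonal μ := by
  classical
  set T : S → Module.End ℂ (EuclideanSpace ℂ (Fin N)) :=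
    fun x => Matrix.toEuclideanLin (W x) with hT
  have hmul : ∀ A B : Matrix (Fin N) (Fin N) ℂ,
      Matrix.toEuclideanLin (A * B) = Matrix.toEuclideanLin A * Matrix.toEuclideanLin B := by
    intro A B
    rw [Matrix.toEuclideanLin_eq_toLin]
    exact Matrix.toLin_mul _ _ _ A B
  have hsymm : ∀ x : S, (T x).IsSymmetric := fun x =>
    Matrix.isHermitian_iff_isSymmetric.mp (hherm x x.2)
  have hcomm' : Pairwise (Function.onFun Commute T) := by
    intro x y _
    show T x * T y = T y * T x
    simp only [hT]
    rw [← hmul, ← hmul, hcomm x x.2 y y.2]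
  have hOrth := LinearMap.IsSymmetric.orthogonalFamily_iInf_eigenspaces hsymm
  have hInt :=
    LinearMap.IsSymmetric.LinearMap.IsSymmetric.directSum_isInternal_of_pairwise_commute
      hsymm hcomm'
  set bb := hInt.collectedBasis
    (fun χ => (stdOrthonormalBasis ℂ ↥(⨅ i, Module.End.eigenspace (T i) (χ i))).toBasis)
    with hbbdef
  have hon : Orthonormal ℂ bb :=
    DirectSum.IsInternal.collectedBasis_orthonormal hOrth hInt (fun χ => by
      simpa using (stdOrthonormalBasis ℂ ↥(⨅ i, Module.End.eigenspace (T i) (χ i))).orthonormal)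
  haveI : Fintype (Σ χ : S → ℂ,
      Fin (Module.finrank ℂ ↥(⨅ i, Module.End.eigenspace (T i) (χ i)))) :=
    FiniteDimensional.fintypeBasisIndex bb
  have hcard : Fintype.card (Σ χ : S → ℂ,
      Fin (Module.finrank ℂ ↥(⨅ i, Module.End.eigenspace (T i) (χ i)))) = N := by
    rw [← Module.finrank_eq_card_basis bb, finrank_euclideanSpace_fin]
  set e := Fintype.equivFinOfCardEq hcard with he
  set v : Fin N → EuclideanSpace ℂ (Fin N) := fun j => bb (e.symm j) with hv
  have hon' : Orthonormal ℂ v := hon.comp _ e.symm.injective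
  set U : Matrix (Fin N) (Fin N) ℂ := Matrix.of fun i j => v j i with hU
  have hUU : Uᴴ * U = 1 := by
    ext j k
    rw [Matrix.mul_apply, Matrix.one_apply]
    have h2 := orthonormal_iff_ite.mp hon' j k
    simp only [PiLp.inner_apply, RCLike.inner_apply, starRingEnd_apply] at h2
    simp only [Matrix.conjTranspose_apply, hU, Matrix.of_apply]
    simpa only [mul_comm] using h2
  refine ⟨U, mul_eq_one_comm.mp hUU, hUU, ?_⟩
  intro x hx
  refine ⟨fun j => (e.symm j).1 ⟨x, hx⟩, ?_⟩
  have hbeig : ∀ j : Fin N,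
      Matrix.toEuclideanLin (W x) (v j) = ((e.symm j).1 ⟨x, hx⟩) • v j := by
    intro j
    have hmem := hInt.collectedBasis_mem
      (fun χ => (stdOrthonormalBasis ℂ ↥(⨅ i, Module.End.eigenspace (T i) (χ i))).toBasis)
      (e.symm j)
    have hmem2 : bb (e.symm j) ∈ Module.End.eigenspace (T ⟨x, hx⟩) ((e.symm j).1 ⟨x, hx⟩) :=
      (Submodule.mem_iInf _).mp hmem ⟨x, hx⟩
    exact Module.End.mem_eigenspace_iff.mp hmem2
  ext i j
  have hj := hbeig j
  have hthis := congrFun (congrArg WithLp.ofLp hj) i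
  rw [Matrix.ofLp_toEuclideanLin_apply] at hthis
  rw [Matrix.mul_apply, Matrix.mul_diagonal]
  simp only [hU, Matrix.of_apply]
  calc ∑ k, W x i k * v j k = (W x *ᵥ (WithLp.ofLp (v j))) i := by
        simp [Matrix.mulVec, dotProduct]
    _ = v j i * (e.symm j).1 ⟨x, hx⟩ := by
        rw [hthis]
        simp [mul_comm]

end MyAux


/-- For a matrix weight `W` the following are equivalent:
(i) `W` is unitarily equivalent to a diagonal matrix weight;
(ii) `W(x) W(y) = W(y) W(x)` for all `x, y`;
(iii) there is a positive definite `P` with `W(x) P W(y) = W(y) P W(x)` and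
`W(x) P = P W(x)` for all `x, y`. -/
theorem stmt_1 {N : ℕ} (a b : EReal) (W : ℝ → Matrix (Fin N) (Fin N) ℂ)
    (hW : IsMatrixWeight a b W) :
    ((∃ (U : Matrix (Fin N) (Fin N) ℂ) (Λ : ℝ → Matrix (Fin N) (Fin N) ℂ),
        U * Uᴴ = 1 ∧ Uᴴ * U = 1 ∧ IsMatrixWeight a b Λ ∧
        (∀ x ∈ weightSupport a b, (Λ x).IsDiag) ∧
        ∀ x ∈ weightSupport a b, W x = U * Λ x * Uᴴ) ↔
      (∀ x ∈ weightSupport a b, ∀ y ∈ weightSupport a b, W x * W y = W y * W x)) ∧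
    ((∀ x ∈ weightSupport a b, ∀ y ∈ weightSupport a b, W x * W y = W y * W x) ↔
      (∃ P : Matrix (Fin N) (Fin N) ℂ, P.PosDef ∧
        (∀ x ∈ weightSupport a b, ∀ y ∈ weightSupport a b,
          W x * P * W y = W y * P * W x) ∧
        ∀ x ∈ weightSupport a b, W x * P = P * W x)) := by
  classical
  obtain ⟨hab, hpsd, hpd, hint⟩ := hW
  have main_i_of_ii :
      (∀ x ∈ weightSupport a b, ∀ y ∈ weightSupport a b, W x * W y = W y * W x) →
      (∃ (U : Matrix (Fin N) (Fin N) ℂ) (Λ : ℝ → Matrix (Fin N) (Fin N) ℂ),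
        U * Uᴴ = 1 ∧ Uᴴ * U = 1 ∧ IsMatrixWeight a b Λ ∧
        (∀ x ∈ weightSupport a b, (Λ x).IsDiag) ∧
        ∀ x ∈ weightSupport a b, W x = U * Λ x * Uᴴ) := by
    intro hcomm
    obtain ⟨U, hU1, hU2, hdiag⟩ := simultaneous_diag' (weightSupport a b) W
      (fun x hx => (hpsd x hx).1) hcomm
    refine ⟨U, fun x => Uᴴ * W x * U, hU1, hU2, ⟨hab, ?_, ?_, ?_⟩, ?_, ?_⟩
    · exact fun x hx => (hpsd x hx).conjTranspose_mul_mul_same U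
    · exact hpd.mono (fun x hx => posDef_conj_unitary' hx hU2)
    · intro n i j
      beta_reduce
      have hfun : (fun x : ℝ => (x : ℂ) ^ n * (Uᴴ * W x * U) i j) =
          fun x : ℝ => ∑ k, ∑ l, Uᴴ i k * ((x : ℂ) ^ n * W x k l) * U l j := by
        funext x
        simp only [Matrix.mul_apply, Finset.mul_sum, Finset.sum_mul]
        rw [Finset.sum_comm]
        exact Finset.sum_congr rfl fun k _ => Finset.sum_congr rfl fun l _ => by ring
      rw [hfun]
      apply integrable_finset_sum
      intro k _
      apply integrable_finset_sum
      intro l _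
      exact ((hint n k l).const_mul _).mul_const _
    · intro x hx
      beta_reduce
      obtain ⟨μ, hμ⟩ := hdiag x hx
      have : Uᴴ * W x * U = Matrix.diagonal μ := by
        rw [Matrix.mul_assoc, hμ, ← Matrix.mul_assoc, hU2, Matrix.one_mul]
      rw [this]
      exact Matrix.isDiag_diagonal μ
    · intro x hx
      beta_reduce
      rw [show U * (Uᴴ * W x * U) * Uᴴ = (U * Uᴴ) * (W x * (U * Uᴴ)) by
        simp only [Matrix.mul_assoc], hU1, Matrix.one_mul, Matrix.mul_one]
  constructor
  · constructor
    · rintro ⟨U, Λ, hU1, hU2, hΛ, hd, heq⟩ x hx y hy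
      rw [heq x hx, heq y hy, conj_mul_conj U _ _ hU2, conj_mul_conj U _ _ hU2,
        isDiag_mul_comm' (hd x hx) (hd y hy)]
    · exact main_i_of_ii
  · constructor
    · intro hcomm
      refine ⟨1, Matrix.PosDef.one, fun x hx y hy => ?_, fun x hx => ?_⟩
      · rw [Matrix.mul_one, Matrix.mul_one, hcomm x hx y hy]
      · rw [Matrix.mul_one, Matrix.one_mul]
    · rintro ⟨P, hP, h1, h2⟩ x hx y hy
      apply hP.isUnit.mul_left_cancel
      have e1 : P * (W x * W y) = W x * P * W y := by
        rw [← Matrix.mul_assoc, ← h2 x hx]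
      have e2 : P * (W y * W x) = W y * P * W x := by
        rw [← Matrix.mul_assoc, ← h2 y hy]
      rw [e1, e2, h1 x hx y hy]
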